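/- Let I be a fixed (2r+1)×(2r+1) subimage with k black and h white pixels. If n^2 p(n)^k (1−p(n))^h → +∞ as n → ∞, then the probability that I appears (centered at some pixel) in the n×n random image of level p(n) tends to 1. -/
import Mathlib

open Finset

/-- The probability, under the i.i.d. pixel model on the n×n torus where each
pixel is black (`true`) with probability p, of a set A of images. -/
noncomputable def imgProb (n : ℕ) [NeZero n] (p : ℝ)
    (A : Set ((ZMod n × ZMod n) → Bool)) : ℝ :=
  ∑ η : (ZMod n × ZMod n) → Bool,
    A.indicator (fun η => ∏ x : ZMod n × ZMod n, if η x then p else 1 - p) η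

/-- The (2r+1)×(2r+1) subimage I appears centered at pixel x in the image η on
the n×n torus (periodic boundary). -/
def occursAt (n r : ℕ) (I : Fin (2 * r + 1) × Fin (2 * r + 1) → Bool)
    (η : ZMod n × ZMod n → Bool) (x : ZMod n × ZMod n) : Prop :=
  ∀ a : Fin (2 * r + 1) × Fin (2 * r + 1),
    η (x.1 + (a.1.1 : ZMod n) - (r : ZMod n),
       x.2 + (a.2.1 : ZMod n) - (r : ZMod n)) = I a


lemma sumW {δ : Type*} [Fintype δ] [DecidableEq δ] (p : ℝ) :
    ∑ v : δ → Bool, ∏ d : δ, (if v d then p else 1 - p) = 1 := by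
  classical
  rw [← Fintype.piFinset_univ,
    ← Finset.prod_univ_sum (fun _ : δ => (univ : Finset Bool))
      (fun _ b => if b = true then p else 1 - p)]
  simp

lemma injSum {α γ : Type*} [Fintype α] [DecidableEq α] [Fintype γ] [DecidableEq γ]
    (p : ℝ) (Φ : γ → α) (hΦ : Function.Injective Φ) (g : (γ → Bool) → ℝ) :
    ∑ η : α → Bool, g (η ∘ Φ) * ∏ x : α, (if η x then p else 1 - p)
      = ∑ ζ : γ → Bool, g ζ * ∏ c : γ, (if ζ c then p else 1 - p) := by
  classical
  set δ := {x : α // x ∉ Set.range Φ} with hδ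
  have hbij : Function.Bijective (Sum.elim Φ (Subtype.val : δ → α)) := by
    constructor
    · rintro (b | d) (b' | d') hbd <;>
        simp only [Sum.elim_inl, Sum.elim_inr] at hbd
      · exact congrArg Sum.inl (hΦ hbd)
      · exact (d'.2 ⟨b, hbd⟩).elim
      · exact (d.2 ⟨b', hbd.symm⟩).elim
      · exact congrArg Sum.inr (Subtype.ext hbd)
    · intro x
      by_cases hx : x ∈ Set.range Φ
      · obtain ⟨b, rfl⟩ := hx; exact ⟨Sum.inl b, rfl⟩
      · exact ⟨Sum.inr ⟨x, hx⟩, rfl⟩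
  set e := Equiv.ofBijective _ hbij with he
  have heL : ∀ b : γ, e (Sum.inl b) = Φ b := fun b => rfl
  have heR : ∀ d : δ, e (Sum.inr d) = d.1 := fun d => rfl
  have hsymmL : ∀ b : γ, e.symm (Φ b) = Sum.inl b := by
    intro b; apply e.injective; rw [Equiv.apply_symm_apply, heL]
  have hsymmR : ∀ d : δ, e.symm d.1 = Sum.inr d := by
    intro d; apply e.injective; rw [Equiv.apply_symm_apply, heR]
  have key : Function.Bijective
      (fun zv : (γ → Bool) × (δ → Bool) => (Sum.elim zv.1 zv.2) ∘ e.symm) := by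
    constructor
    · intro zv zv' hz
      have h1 : ∀ b : γ, zv.1 b = zv'.1 b := by
        intro b
        have := congrFun hz (Φ b)
        simpa [hsymmL b] using this
      have h2 : ∀ d : δ, zv.2 d = zv'.2 d := by
        intro d
        have := congrFun hz (d.1)
        simpa [hsymmR d] using this
      exact Prod.ext (funext h1) (funext h2)
    · intro η
      refine ⟨⟨fun b => η (Φ b), fun d => η d.1⟩, ?_⟩
      funext x
      rcases h : e.symm x with b | d
      · have : x = Φ b := by rw [← heL b, ← h, Equiv.apply_symm_apply]
        simp [this, hsymmL b]
      · have : x = d.1 := by rw [← heR d, ← h, Equiv.apply_symm_apply]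
        simp [this, hsymmR d]
  rw [← Fintype.sum_bijective _ key _ _ (fun zv => rfl)]
  rw [Fintype.sum_prod_type]
  have hterm : ∀ (ζ : γ → Bool) (v : δ → Bool),
      g ((Sum.elim ζ v ∘ e.symm) ∘ Φ) * ∏ x : α, (if (Sum.elim ζ v ∘ e.symm) x then p else 1 - p)
      = g ζ * ((∏ c : γ, (if ζ c then p else 1 - p)) * ∏ d : δ, (if v d then p else 1 - p)) := by
    intro ζ v
    have hc : (Sum.elim ζ v ∘ e.symm) ∘ Φ = ζ := by
      funext b; simp [Function.comp, hsymmL b]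
    have hprod : ∏ x : α, (if (Sum.elim ζ v ∘ e.symm) x then p else 1 - p)
        = (∏ c : γ, (if ζ c then p else 1 - p)) * ∏ d : δ, (if v d then p else 1 - p) := by
      rw [← Equiv.prod_comp e (fun x => if (Sum.elim ζ v ∘ e.symm) x then p else 1 - p)]
      rw [Fintype.prod_sum_type]
      congr 1
      · exact Finset.prod_congr rfl fun b _ => by simp [heL b, Function.comp, hsymmL b]
      · exact Finset.prod_congr rfl fun d _ => by simp [heR d, Function.comp, hsymmR d]
    rw [hc, hprod]
  calc ∑ ζ : γ → Bool, ∑ v : δ → Bool,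
        g ((Sum.elim ζ v ∘ e.symm) ∘ Φ) * ∏ x : α, (if (Sum.elim ζ v ∘ e.symm) x then p else 1 - p)
      = ∑ ζ : γ → Bool, ∑ v : δ → Bool,
        g ζ * ((∏ c : γ, (if ζ c then p else 1 - p)) * ∏ d : δ, (if v d then p else 1 - p)) := by
        exact Finset.sum_congr rfl fun ζ _ => Finset.sum_congr rfl fun v _ => hterm ζ v
    _ = ∑ ζ : γ → Bool, g ζ * ∏ c : γ, (if ζ c then p else 1 - p) := by
        refine Finset.sum_congr rfl fun ζ _ => ?_
        rw [← Finset.mul_sum, ← Finset.mul_sum, sumW p, mul_one]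

lemma prodSum {ι β : Type*} [Fintype ι] [DecidableEq ι] [Fintype β] [DecidableEq β]
    (p : ℝ) (g : ι → (β → Bool) → ℝ) :
    ∑ ζ : ι × β → Bool, (∏ t : ι, g t (fun b => ζ (t, b)))
        * ∏ c : ι × β, (if ζ c then p else 1 - p)
      = ∏ t : ι, ∑ ξ : β → Bool, g t ξ * ∏ b : β, (if ξ b then p else 1 - p) := by
  classical
  conv_rhs => rw [Finset.prod_univ_sum (fun _ : ι => (univ : Finset (β → Bool)))
      (fun t ξ => g t ξ * ∏ b : β, (if ξ b = true then p else 1 - p))]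
  rw [Fintype.piFinset_univ]
  rw [← Fintype.sum_bijective (Equiv.curry ι β Bool) (Equiv.curry ι β Bool).bijective _ _
    (fun ζ => rfl)]
  refine Fintype.sum_congr _ _ fun ζ => ?_
  rw [Finset.prod_mul_distrib, Fintype.prod_prod_type]
  rfl

lemma windowSum {β : Type*} [Fintype β] [DecidableEq β] (p : ℝ) (I : β → Bool) :
    ∑ ξ : β → Bool, (if (∀ b, ξ b = I b) then (0:ℝ) else 1)
        * ∏ b : β, (if ξ b then p else 1 - p)
      = 1 - ∏ b : β, (if I b then p else 1 - p) := by
  classical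
  have h1 : ∀ ξ : β → Bool, (if (∀ b, ξ b = I b) then (0:ℝ) else 1)
      = 1 - (if ξ = I then 1 else 0) := by
    intro ξ
    by_cases hξ : ξ = I
    · simp [hξ]
    · rw [if_neg (by simpa [funext_iff] using hξ), if_neg hξ, sub_zero]
  simp_rw [h1, sub_mul, one_mul, Finset.sum_sub_distrib, sumW, ite_mul, one_mul, zero_mul]
  rw [Finset.sum_ite_eq' univ I (fun ξ => ∏ b : β, (if ξ b then p else 1 - p))]
  simp

lemma W_nonneg {p : ℝ} (hp0 : 0 ≤ p) (hp1 : p ≤ 1) {δ : Type*} [Fintype δ]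
    (η : δ → Bool) : 0 ≤ ∏ x : δ, (if η x then p else 1 - p) :=
  Finset.prod_nonneg fun x _ => by split <;> linarith

lemma imgProb_nonneg {n : ℕ} [NeZero n] {p : ℝ} (hp0 : 0 ≤ p) (hp1 : p ≤ 1)
    (A : Set ((ZMod n × ZMod n) → Bool)) : 0 ≤ imgProb n p A :=
  Finset.sum_nonneg fun η _ =>
    Set.indicator_apply_nonneg fun _ => W_nonneg hp0 hp1 _

lemma imgProb_mono {n : ℕ} [NeZero n] {p : ℝ} (hp0 : 0 ≤ p) (hp1 : p ≤ 1)
    {A B : Set ((ZMod n × ZMod n) → Bool)} (hAB : A ⊆ B) :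
    imgProb n p A ≤ imgProb n p B :=
  Finset.sum_le_sum fun η _ =>
    Set.indicator_le_indicator_of_subset hAB (fun _ => W_nonneg hp0 hp1 _) η

lemma imgProb_add_compl {n : ℕ} [NeZero n] (p : ℝ)
    (A : Set ((ZMod n × ZMod n) → Bool)) :
    imgProb n p A + imgProb n p Aᶜ = 1 := by
  classical
  rw [imgProb, imgProb, ← Finset.sum_add_distrib]
  rw [Finset.sum_congr rfl fun η _ =>
    Set.indicator_self_add_compl_apply A
      (fun η => ∏ x : ZMod n × ZMod n, if η x then p else 1 - p) η]
  exact sumW p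

lemma imgProb_le_one {n : ℕ} [NeZero n] {p : ℝ} (hp0 : 0 ≤ p) (hp1 : p ≤ 1)
    (A : Set ((ZMod n × ZMod n) → Bool)) : imgProb n p A ≤ 1 := by
  have h := imgProb_add_compl p A
  have h2 := imgProb_nonneg hp0 hp1 Aᶜ
  linarith

lemma prodI {γ : Type*} [Fintype γ] [DecidableEq γ] (p : ℝ) (I : γ → Bool) (k h : ℕ)
    (hk : (Finset.univ.filter (fun a => I a = true)).card = k)
    (hh : (Finset.univ.filter (fun a => I a = false)).card = h) :
    ∏ a : γ, (if I a then p else 1 - p) = p ^ k * (1 - p) ^ h := by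
  classical
  rw [Finset.prod_ite, Finset.prod_const, Finset.prod_const, hk]
  congr 2
  rw [← hh]
  congr 1
  ext a
  simp [Bool.not_eq_true]

lemma sublattice (n r : ℕ) [NeZero n] (I : Fin (2 * r + 1) × Fin (2 * r + 1) → Bool)
    (p : ℝ) (m : ℕ) (hm : (2 * r + 1) * m ≤ n) :
    imgProb n p {η | ∀ t : Fin m × Fin m, ¬ occursAt n r I η
        ((((2 * r + 1) * t.1.1 + r : ℕ) : ZMod n), (((2 * r + 1) * t.2.1 + r : ℕ) : ZMod n))}
      = (1 - ∏ a : Fin (2 * r + 1) × Fin (2 * r + 1), (if I a then p else 1 - p)) ^ (m * m) := by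
  classical
  have hs0 : 0 < 2 * r + 1 := Nat.succ_pos _
  -- the window coordinate map
  set cc : Fin m → Fin (2 * r + 1) → ZMod n := fun i a => (((2 * r + 1) * i.1 + a.1 : ℕ) : ZMod n) with hcc
  have hlt : ∀ (i : Fin m) (a : Fin (2 * r + 1)), (2 * r + 1) * i.1 + a.1 < n := by
    intro i a
    calc (2 * r + 1) * i.1 + a.1 < (2 * r + 1) * i.1 + (2 * r + 1) := by omega
      _ = (2 * r + 1) * (i.1 + 1) := by ring
      _ ≤ (2 * r + 1) * m := Nat.mul_le_mul_left (2 * r + 1) i.2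
      _ ≤ n := hm
  have ccinj : ∀ (i i' : Fin m) (a a' : Fin (2 * r + 1)), cc i a = cc i' a' → i = i' ∧ a = a' := by
    intro i i' a a' hcceq
    have hnat : (2 * r + 1) * i.1 + a.1 = (2 * r + 1) * i'.1 + a'.1 := by
      have h1 := ZMod.val_cast_of_lt (hlt i a)
      have h2 := ZMod.val_cast_of_lt (hlt i' a')
      rw [← h1, ← h2]
      exact congrArg ZMod.val hcceq
    have hi : i.1 = i'.1 := by
      have e1 : ((2 * r + 1) * i.1 + a.1) / (2 * r + 1) = i.1 := by
        rw [Nat.mul_add_div hs0, Nat.div_eq_of_lt a.2, Nat.add_zero]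
      have e2 : ((2 * r + 1) * i'.1 + a'.1) / (2 * r + 1) = i'.1 := by
        rw [Nat.mul_add_div hs0, Nat.div_eq_of_lt a'.2, Nat.add_zero]
      rw [← e1, ← e2, hnat]
    refine ⟨Fin.ext hi, Fin.ext ?_⟩
    rw [hi] at hnat
    omega
  set Φ : ((Fin m × Fin m) × (Fin (2 * r + 1) × Fin (2 * r + 1))) → ZMod n × ZMod n :=
    fun ta => (cc ta.1.1 ta.2.1, cc ta.1.2 ta.2.2) with hΦdef
  have hΦ : Function.Injective Φ := by
    rintro ⟨⟨i, j⟩, ⟨a, b⟩⟩ ⟨⟨i', j'⟩, ⟨a', b'⟩⟩ heq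
    simp only [Φ, Prod.mk.injEq] at heq
    obtain ⟨h1, h2⟩ := heq
    obtain ⟨hii, haa⟩ := ccinj _ _ _ _ h1
    obtain ⟨hjj, hbb⟩ := ccinj _ _ _ _ h2
    simp [hii, haa, hjj, hbb]
  -- occursAt at the sublattice point t is a condition on η ∘ Φ
  have hocc : ∀ (η : ZMod n × ZMod n → Bool) (t : Fin m × Fin m),
      occursAt n r I η ((((2 * r + 1) * t.1.1 + r : ℕ) : ZMod n), (((2 * r + 1) * t.2.1 + r : ℕ) : ZMod n))
        ↔ ∀ a : Fin (2 * r + 1) × Fin (2 * r + 1), (η ∘ Φ) (t, a) = I a := by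
    intro η t
    unfold occursAt
    refine forall_congr' fun a => ?_
    have e1 : (((2 * r + 1) * t.1.1 + r : ℕ) : ZMod n) + (a.1.1 : ZMod n) - (r : ZMod n)
        = (((2 * r + 1) * t.1.1 + a.1.1 : ℕ) : ZMod n) := by push_cast; ring
    have e2 : (((2 * r + 1) * t.2.1 + r : ℕ) : ZMod n) + (a.2.1 : ZMod n) - (r : ZMod n)
        = (((2 * r + 1) * t.2.1 + a.2.1 : ℕ) : ZMod n) := by push_cast; ring
    rw [show ((((2 * r + 1) * t.1.1 + r : ℕ) : ZMod n), (((2 * r + 1) * t.2.1 + r : ℕ) : ZMod n)).1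
        = (((2 * r + 1) * t.1.1 + r : ℕ) : ZMod n) from rfl]
    simp only [Function.comp_apply, hΦdef, hcc]
    rw [e1, e2]
  -- indicator rewriting
  set g : (((Fin m × Fin m) × (Fin (2 * r + 1) × Fin (2 * r + 1))) → Bool) → ℝ :=
    fun ζ => ∏ t : Fin m × Fin m,
      (if (∀ a : Fin (2 * r + 1) × Fin (2 * r + 1), ζ (t, a) = I a) then (0:ℝ) else 1) with hg
  have hind : ∀ η : ZMod n × ZMod n → Bool,
      Set.indicator {η | ∀ t : Fin m × Fin m, ¬ occursAt n r I η
          ((((2 * r + 1) * t.1.1 + r : ℕ) : ZMod n), (((2 * r + 1) * t.2.1 + r : ℕ) : ZMod n))}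
        (fun η => ∏ x : ZMod n × ZMod n, if η x then p else 1 - p) η
      = g (η ∘ Φ) * ∏ x : ZMod n × ZMod n, (if η x then p else 1 - p) := by
    intro η
    by_cases hB : ∀ t : Fin m × Fin m, ¬ occursAt n r I η
        ((((2 * r + 1) * t.1.1 + r : ℕ) : ZMod n), (((2 * r + 1) * t.2.1 + r : ℕ) : ZMod n))
    · rw [Set.indicator_of_mem (show _ ∈ {η : ZMod n × ZMod n → Bool | ∀ t : Fin m × Fin m, ¬ occursAt n r I η ((((2 * r + 1) * t.1.1 + r : ℕ) : ZMod n), (((2 * r + 1) * t.2.1 + r : ℕ) : ZMod n))} from hB)]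
      have : g (η ∘ Φ) = 1 := by
        rw [hg]
        refine Finset.prod_eq_one fun t _ => ?_
        rw [if_neg]
        intro hall
        exact hB t ((hocc η t).2 hall)
      rw [this, one_mul]
    · rw [Set.indicator_of_notMem (show _ ∉ {η : ZMod n × ZMod n → Bool | ∀ t : Fin m × Fin m, ¬ occursAt n r I η ((((2 * r + 1) * t.1.1 + r : ℕ) : ZMod n), (((2 * r + 1) * t.2.1 + r : ℕ) : ZMod n))} from hB)]
      push_neg at hB
      obtain ⟨t, ht⟩ := hB
      have : g (η ∘ Φ) = 0 := by
        rw [hg]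
        refine Finset.prod_eq_zero (Finset.mem_univ t) ?_
        rw [if_pos ((hocc η t).1 ht)]
      rw [this, zero_mul]
  rw [imgProb]
  rw [Finset.sum_congr rfl fun η _ => hind η]
  rw [injSum p Φ hΦ g]
  rw [hg]
  rw [prodSum p (fun _ ξ => if (∀ a : Fin (2 * r + 1) × Fin (2 * r + 1), ξ a = I a) then (0:ℝ) else 1)]
  rw [Finset.prod_congr rfl fun t _ => windowSum p I]
  rw [Finset.prod_const, Finset.card_univ, Fintype.card_prod, Fintype.card_fin]

/-- If n² p(n)ᵏ (1−p(n))ʰ → ∞ then the probability that a fixed (2r+1)×(2r+1)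
subimage with k black and h white pixels appears somewhere tends to 1. -/
theorem stmt4 (r k h : ℕ)
    (I : Fin (2 * r + 1) × Fin (2 * r + 1) → Bool)
    (hk : (Finset.univ.filter (fun a => I a = true)).card = k)
    (hh : (Finset.univ.filter (fun a => I a = false)).card = h)
    (p : ℕ → ℝ) (hp : ∀ n, p n ∈ Set.Icc (0 : ℝ) 1)
    (hlim : Filter.Tendsto (fun n : ℕ => (n : ℝ) ^ 2 * p n ^ k * (1 - p n) ^ h)
      Filter.atTop Filter.atTop) :
    Filter.Tendsto
      (fun n : ℕ => imgProb (n + 1) (p (n + 1)) {η | ∃ x, occursAt (n + 1) r I η x})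
      Filter.atTop (nhds 1) := by
  classical
  set q : ℕ → ℝ := fun n => p n ^ k * (1 - p n) ^ h with hq
  have hq0 : ∀ n, 0 ≤ q n := fun n =>
    mul_nonneg (pow_nonneg (hp n).1 k) (pow_nonneg (by linarith [(hp n).2]) h)
  have hq1 : ∀ n, q n ≤ 1 := fun n => by
    have h0 := (hp n).1; have h1 := (hp n).2
    have e1 : p n ^ k ≤ 1 := pow_le_one₀ h0 h1
    have e2 : (1 - p n) ^ h ≤ 1 := pow_le_one₀ (by linarith) (by linarith)
    have e3 : 0 ≤ p n ^ k := pow_nonneg h0 k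
    have e4 : (0:ℝ) ≤ (1 - p n) ^ h := pow_nonneg (by linarith) h
    simp only [hq]
    nlinarith
  set m : ℕ → ℕ := fun N => (N + 1) / (2 * r + 1) with hmdef
  -- lower bound
  have hlow : ∀ N : ℕ, 2 * r + 1 ≤ N + 1 →
      1 - Real.exp (-(q (N + 1) * ((m N * m N : ℕ) : ℝ)))
        ≤ imgProb (N + 1) (p (N + 1)) {η | ∃ x, occursAt (N + 1) r I η x} := by
    intro N hN
    have hp0 := (hp (N + 1)).1
    have hp1 := (hp (N + 1)).2
    have hm : (2 * r + 1) * m N ≤ N + 1 := by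
      rw [hmdef, mul_comm]; exact Nat.div_mul_le_self _ _
    have hsub := sublattice (N + 1) r I (p (N + 1)) (m N) hm
    rw [prodI (p (N + 1)) I k h hk hh] at hsub
    set B : Set ((ZMod (N+1) × ZMod (N+1)) → Bool) :=
      {η | ∀ t : Fin (m N) × Fin (m N), ¬ occursAt (N+1) r I η
        ((((2 * r + 1) * t.1.1 + r : ℕ) : ZMod (N+1)),
         (((2 * r + 1) * t.2.1 + r : ℕ) : ZMod (N+1)))} with hB
    have hsubset : Bᶜ ⊆ {η | ∃ x, occursAt (N+1) r I η x} := by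
      intro η hη
      simp only [hB, Set.mem_compl_iff, Set.mem_setOf_eq] at hη
      push_neg at hη
      obtain ⟨t, ht⟩ := hη
      exact ⟨_, ht⟩
    have h1 : imgProb (N+1) (p (N+1)) Bᶜ ≤
        imgProb (N+1) (p (N+1)) {η | ∃ x, occursAt (N+1) r I η x} :=
      imgProb_mono hp0 hp1 hsubset
    have h2 : imgProb (N+1) (p (N+1)) Bᶜ = 1 - (1 - q (N+1)) ^ (m N * m N) := by
      have := imgProb_add_compl (p (N+1)) B
      rw [hsub] at this
      linarith
    have h3 : (1 - q (N+1)) ^ (m N * m N) ≤ Real.exp (-(q (N+1) * ((m N * m N : ℕ) : ℝ))) := by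
      have e1 : (1 : ℝ) - q (N+1) ≤ Real.exp (-(q (N+1))) := by
        have := Real.add_one_le_exp (-(q (N+1))); linarith
      have e0 : (0:ℝ) ≤ 1 - q (N+1) := by linarith [hq1 (N+1)]
      calc (1 - q (N+1)) ^ (m N * m N) ≤ (Real.exp (-(q (N+1)))) ^ (m N * m N) :=
            pow_le_pow_left₀ e0 e1 _
        _ = Real.exp (-(q (N+1) * ((m N * m N : ℕ) : ℝ))) := by
            rw [← Real.exp_nat_mul]; ring_nf
    linarith
  -- the exponent tends to infinity
  have hinf : Filter.Tendsto (fun N => q (N + 1) * ((m N * m N : ℕ) : ℝ))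
      Filter.atTop Filter.atTop := by
    have h1 : Filter.Tendsto (fun N : ℕ => ((N + 1 : ℕ) : ℝ) ^ 2 * q (N + 1))
        Filter.atTop Filter.atTop := by
      have := hlim.comp (Filter.tendsto_add_atTop_nat 1)
      refine this.congr fun N => ?_
      simp only [Function.comp_apply, hq]
      push_cast; ring
    have hc : (0:ℝ) < ((2 * (2 * r + 1) : ℕ) : ℝ) ^ 2 := by positivity
    have h2 : Filter.Tendsto
        (fun N : ℕ => (((2 * (2 * r + 1) : ℕ) : ℝ) ^ 2)⁻¹ * (((N + 1 : ℕ) : ℝ) ^ 2 * q (N + 1)))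
        Filter.atTop Filter.atTop := h1.const_mul_atTop (by positivity)
    refine Filter.tendsto_atTop_mono' _ ?_ h2
    filter_upwards [Filter.eventually_ge_atTop (2 * r + 1)] with N hN
    rw [inv_mul_le_iff₀ hc]
    have hmge : 1 ≤ m N := by
      rw [hmdef]
      exact Nat.one_le_div_iff (Nat.succ_pos _) |>.2 (by omega)
    have hnat : N + 1 ≤ 2 * (2 * r + 1) * m N := by
      have hdm := Nat.div_add_mod (N + 1) (2 * r + 1)
      have hmod : (N + 1) % (2 * r + 1) < 2 * r + 1 := Nat.mod_lt _ (Nat.succ_pos _)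
      have hsm : 2 * r + 1 ≤ (2 * r + 1) * m N := Nat.le_mul_of_pos_right _ hmge
      simp only [hmdef] at hsm ⊢
      rw [Nat.mul_assoc]
      omega
    have hcast : ((N + 1 : ℕ) : ℝ) ≤ ((2 * (2 * r + 1) * m N : ℕ) : ℝ) := Nat.cast_le.2 hnat
    have hsq : ((N + 1 : ℕ) : ℝ) ^ 2 ≤ ((2 * (2 * r + 1) * m N : ℕ) : ℝ) ^ 2 :=
      pow_le_pow_left₀ (by positivity) hcast 2
    calc ((N + 1 : ℕ) : ℝ) ^ 2 * q (N + 1)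
        ≤ ((2 * (2 * r + 1) * m N : ℕ) : ℝ) ^ 2 * q (N + 1) :=
          mul_le_mul_of_nonneg_right hsq (hq0 _)
      _ = ((2 * (2 * r + 1) : ℕ) : ℝ) ^ 2 * (q (N + 1) * ((m N * m N : ℕ) : ℝ)) := by
          push_cast; ring
  have hexp : Filter.Tendsto (fun N => 1 - Real.exp (-(q (N + 1) * ((m N * m N : ℕ) : ℝ))))
      Filter.atTop (nhds 1) := by
    have : Filter.Tendsto (fun N => Real.exp (-(q (N + 1) * ((m N * m N : ℕ) : ℝ))))
        Filter.atTop (nhds 0) :=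
      Real.tendsto_exp_atBot.comp (Filter.tendsto_neg_atBot_iff.2 hinf)
    have := (tendsto_const_nhds (x := (1:ℝ)) (f := Filter.atTop (α := ℕ))).sub this
    simpa using this
  refine tendsto_of_tendsto_of_tendsto_of_le_of_le' hexp tendsto_const_nhds ?_ ?_
  · filter_upwards [Filter.eventually_ge_atTop (2 * r + 1)] with N hN
    exact hlow N (by omega)
  · filter_upwards with N
    exact imgProb_le_one (hp (N+1)).1 (hp (N+1)).2 _
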